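/- Strategy existence for the exponential: for any opponent game O, the game !O has a strategy if and only if O has a strategy. -/

import Mathlib

/-- Rose trees: the unlabeled shape of a game tree. -/
inductive RTree : Type where
  | node : List RTree → RTree

mutual
/-- An opponent game: a finite list of player games (its children). -/
inductive OGame : Type where
  | mk : List PGame → OGame
/-- A player game: a finite list of opponent games (its children). -/
inductive PGame : Type where
  | mk : List OGame → PGame
end

mutual
/-- The dual of an opponent game. -/
def OGame.dual : OGame → PGame
  | .mk ps => .mk (ps.attach.map fun ⟨p, _⟩ => p.dual)
/-- The dual of a player game. -/
def PGame.dual : PGame → OGame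
  | .mk os => .mk (os.attach.map fun ⟨o, _⟩ => o.dual)
end

mutual
/-- Strategy existence in an opponent game: a conjunction over children. -/
def OGame.strat : OGame → Bool
  | .mk ps => ps.attach.all fun ⟨p, _⟩ => p.strat
/-- Strategy existence in a player game: a disjunction over children. -/
def PGame.strat : PGame → Bool
  | .mk os => os.attach.any fun ⟨o, _⟩ => o.strat
end

mutual
/-- Tensor of opponent games: `O ⊗ O' = (P_i ⊗ˡ O', O ⊗ʳ P'_k | …)`. -/
def otimes : OGame → OGame → OGame
  | .mk ps, .mk qs => .mk ((ps.attach.map fun ⟨p, _⟩ => oxl p (.mk qs)) ++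
      (qs.attach.map fun ⟨q, _⟩ => oxr (.mk ps) q))
  termination_by o o' => sizeOf o + sizeOf o'
  decreasing_by
  · have := List.sizeOf_lt_of_mem ‹p ∈ ps›; simp_all; omega
  · have := List.sizeOf_lt_of_mem ‹q ∈ qs›; simp_all; omega
/-- Mixed tensor `O ⊗ʳ P = {O ⊗ O_j | j ∈ J}`. -/
def oxr : OGame → PGame → PGame
  | o, .mk os => .mk (os.attach.map fun ⟨oj, _⟩ => otimes o oj)
  termination_by o p => sizeOf o + sizeOf p
  decreasing_by
  · have := List.sizeOf_lt_of_mem ‹oj ∈ os›; simp_all; omega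
/-- Mixed tensor `P ⊗ˡ O = {O_j ⊗ O | j ∈ J}`. -/
def oxl : PGame → OGame → PGame
  | .mk os, o => .mk (os.attach.map fun ⟨oj, _⟩ => otimes oj o)
  termination_by p o => sizeOf p + sizeOf o
  decreasing_by
  · have := List.sizeOf_lt_of_mem ‹oj ∈ os›; simp_all; omega
end

mutual
/-- Par of player games: `P ⅋ P' = {O_j ⅋ˡ P', P ⅋ʳ O'_k | …}`. -/
def parr : PGame → PGame → PGame
  | .mk os, .mk qs => .mk ((os.attach.map fun ⟨o, _⟩ => parrOP o (.mk qs)) ++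
      (qs.attach.map fun ⟨q, _⟩ => parrPO (.mk os) q))
  termination_by p p' => sizeOf p + sizeOf p'
  decreasing_by
  · have := List.sizeOf_lt_of_mem ‹o ∈ os›; simp_all; omega
  · have := List.sizeOf_lt_of_mem ‹q ∈ qs›; simp_all; omega
/-- Mixed par `P ⅋ʳ O = (P ⅋ P_i | i ∈ I)`. -/
def parrPO : PGame → OGame → OGame
  | p, .mk ps => .mk (ps.attach.map fun ⟨pi, _⟩ => parr p pi)
  termination_by p o => sizeOf p + sizeOf o
  decreasing_by
  · have := List.sizeOf_lt_of_mem ‹pi ∈ ps›; simp_all; omega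
/-- Mixed par `O ⅋ˡ P = (P_i ⅋ P | i ∈ I)`. -/
def parrOP : OGame → PGame → OGame
  | .mk ps, p => .mk (ps.attach.map fun ⟨pi, _⟩ => parr pi p)
  termination_by o p => sizeOf o + sizeOf p
  decreasing_by
  · have := List.sizeOf_lt_of_mem ‹pi ∈ ps›; simp_all; omega
end

mutual
/-- The exponential `!O`: `!() = ()` and `!O = ⊗_{i∈I} (b_i : !'P_i)` for `I ≠ ∅`. -/
def bang : OGame → OGame
  | .mk [] => .mk []
  | .mk (p :: ps) =>
      (ps.attach.map fun ⟨q, _⟩ => OGame.mk [bang' q]).foldl otimes (OGame.mk [bang' p])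
/-- The auxiliary exponential `!'{a_j : O_j} = {a_j : !O_j}`. -/
def bang' : PGame → PGame
  | .mk os => .mk (os.attach.map fun ⟨o, _⟩ => bang o)
end

mutual
/-- Underlying unlabeled tree of an opponent game. -/
def OGame.toTree : OGame → RTree
  | .mk ps => .node (ps.attach.map fun ⟨p, _⟩ => p.toTree)
/-- Underlying unlabeled tree of a player game. -/
def PGame.toTree : PGame → RTree
  | .mk os => .node (os.attach.map fun ⟨o, _⟩ => o.toTree)
end

/-- Number of nodes (including the root). -/
def RTree.nodes : RTree → ℕ
  | .node cs => 1 + (cs.attach.map fun ⟨c, _⟩ => c.nodes).sum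

/-- Number of parent-child edges. -/
def RTree.edges : RTree → ℕ
  | .node cs => cs.length + (cs.attach.map fun ⟨c, _⟩ => c.edges).sum

/-- Number of leaves. -/
def RTree.leaves : RTree → ℕ
  | .node [] => 1
  | .node cs => (cs.attach.map fun ⟨c, _⟩ => c.leaves).sum

/-- Uniform size: `u[leaf] = 0`, `u[node with n children] = (n-1) + Σ u[child]`. -/
def RTree.usize : RTree → ℕ
  | .node [] => 0
  | .node cs => (cs.length - 1) + (cs.attach.map fun ⟨c, _⟩ => c.usize).sum

/-- Depth: leaves have depth 0. -/
def RTree.depth : RTree → ℕ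
  | .node cs => (cs.attach.map fun ⟨c, _⟩ => c.depth + 1).foldr max 0

/-- `profile t k` is the number of nodes of `t` at depth `k`. -/
def RTree.profile : RTree → ℕ → ℕ
  | _, 0 => 1
  | .node cs, k + 1 => (cs.attach.map fun ⟨c, _⟩ => c.profile k).sum

mutual
/-- Number of player nodes of an opponent game. -/
def OGame.pnodes : OGame → ℕ
  | .mk ps => (ps.attach.map fun ⟨p, _⟩ => p.pnodes).sum
/-- Number of player nodes of a player game (the root counts). -/
def PGame.pnodes : PGame → ℕ
  | .mk os => 1 + (os.attach.map fun ⟨o, _⟩ => o.pnodes).sum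
end

mutual
/-- Number of edges leaving opponent nodes, for an opponent game. -/
def OGame.eo : OGame → ℕ
  | .mk ps => ps.length + (ps.attach.map fun ⟨p, _⟩ => p.eo).sum
/-- Number of edges leaving opponent nodes, for a player game. -/
def PGame.eo : PGame → ℕ
  | .mk os => (os.attach.map fun ⟨o, _⟩ => o.eo).sum
end

mutual
/-- Number of edges leaving player nodes, for an opponent game. -/
def OGame.ep : OGame → ℕ
  | .mk ps => (ps.attach.map fun ⟨p, _⟩ => p.ep).sum
/-- Number of edges leaving player nodes, for a player game. -/
def PGame.ep : PGame → ℕ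
  | .mk os => os.length + (os.attach.map fun ⟨o, _⟩ => o.ep).sum
end

/-- `γ(i,j) = 1` if `i` or `j` is zero or even, else `0`. -/
def gammaCoef (i j : ℕ) : ℕ :=
  if i = 0 ∨ j = 0 ∨ i % 2 = 0 ∨ j % 2 = 0 then 1 else 0

mutual
/-- The single-branch player chain `L_n`. -/
def Lp : ℕ → PGame
  | 0 => .mk []
  | n + 1 => .mk [Lo n]
/-- The single-branch opponent chain `L'_n`. -/
def Lo : ℕ → OGame
  | 0 => .mk []
  | n + 1 => .mk [Lp n]
end


lemma ostrat_iff (ps : List PGame) :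
    (OGame.mk ps).strat = true ↔ ∀ p ∈ ps, p.strat = true := by
  rw [OGame.strat]; simp [List.all_eq_true]

lemma pstrat_iff (os : List OGame) :
    (PGame.mk os).strat = true ↔ ∃ o ∈ os, o.strat = true := by
  rw [PGame.strat]; simp [List.any_eq_true]

mutual
theorem otimes_strat : ∀ o o' : OGame,
    ((otimes o o').strat = true ↔ (o.strat = true ∧ o'.strat = true))
  | .mk ps, .mk qs => by
    rw [otimes, ostrat_iff]
    constructor
    · intro h
      constructor
      · rw [ostrat_iff]; intro p hp
        have := h _ (List.mem_append_left _
          (List.mem_map.mpr ⟨⟨p, hp⟩, List.mem_attach _ _, rfl⟩))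
        exact ((oxl_strat p (.mk qs)).mp this).1
      · rw [ostrat_iff]; intro q hq
        have := h _ (List.mem_append_right _
          (List.mem_map.mpr ⟨⟨q, hq⟩, List.mem_attach _ _, rfl⟩))
        exact ((oxr_strat (.mk ps) q).mp this).2
    · rintro ⟨h1, h2⟩ x hx
      rcases List.mem_append.mp hx with hx | hx
      · obtain ⟨⟨p, hp⟩, -, rfl⟩ := List.mem_map.mp hx
        exact (oxl_strat p (.mk qs)).mpr ⟨(ostrat_iff ps).mp h1 p hp, h2⟩
      · obtain ⟨⟨q, hq⟩, -, rfl⟩ := List.mem_map.mp hx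
        exact (oxr_strat (.mk ps) q).mpr ⟨h1, (ostrat_iff qs).mp h2 q hq⟩
  termination_by o o' => sizeOf o + sizeOf o'
  decreasing_by
    all_goals first
      | (have h' := List.sizeOf_lt_of_mem hp;
         simp only [OGame.mk.sizeOf_spec, PGame.mk.sizeOf_spec] at h' ⊢; omega)
      | (have h' := List.sizeOf_lt_of_mem hq;
         simp only [OGame.mk.sizeOf_spec, PGame.mk.sizeOf_spec] at h' ⊢; omega)
theorem oxr_strat : ∀ (o : OGame) (p : PGame),
    ((oxr o p).strat = true ↔ (o.strat = true ∧ p.strat = true))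
  | o, .mk os => by
    rw [oxr, pstrat_iff]
    constructor
    · rintro ⟨x, hx, hs⟩
      obtain ⟨⟨oj, hoj⟩, -, rfl⟩ := List.mem_map.mp hx
      obtain ⟨h1, h2⟩ := (otimes_strat o oj).mp hs
      exact ⟨h1, (pstrat_iff os).mpr ⟨oj, hoj, h2⟩⟩
    · rintro ⟨h1, h2⟩
      obtain ⟨oj, hoj, hs⟩ := (pstrat_iff os).mp h2
      exact ⟨_, List.mem_map.mpr ⟨⟨oj, hoj⟩, List.mem_attach _ _, rfl⟩,
        (otimes_strat o oj).mpr ⟨h1, hs⟩⟩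
  termination_by o p => sizeOf o + sizeOf p
  decreasing_by
    all_goals
      (have h' := List.sizeOf_lt_of_mem hoj;
       simp only [OGame.mk.sizeOf_spec, PGame.mk.sizeOf_spec] at h' ⊢; omega)
theorem oxl_strat : ∀ (p : PGame) (o : OGame),
    ((oxl p o).strat = true ↔ (p.strat = true ∧ o.strat = true))
  | .mk os, o => by
    rw [oxl, pstrat_iff]
    constructor
    · rintro ⟨x, hx, hs⟩
      obtain ⟨⟨oj, hoj⟩, -, rfl⟩ := List.mem_map.mp hx
      obtain ⟨h1, h2⟩ := (otimes_strat oj o).mp hs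
      exact ⟨(pstrat_iff os).mpr ⟨oj, hoj, h1⟩, h2⟩
    · rintro ⟨h1, h2⟩
      obtain ⟨oj, hoj, hs⟩ := (pstrat_iff os).mp h1
      exact ⟨_, List.mem_map.mpr ⟨⟨oj, hoj⟩, List.mem_attach _ _, rfl⟩,
        (otimes_strat oj o).mpr ⟨hs, h2⟩⟩
  termination_by p o => sizeOf p + sizeOf o
  decreasing_by
    all_goals
      (have h' := List.sizeOf_lt_of_mem hoj;
       simp only [OGame.mk.sizeOf_spec, PGame.mk.sizeOf_spec] at h' ⊢; omega)
end

lemma foldl_otimes_strat (l : List OGame) : ∀ init : OGame,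
    ((l.foldl otimes init).strat = true ↔
      (init.strat = true ∧ ∀ x ∈ l, x.strat = true)) := by
  induction l with
  | nil => simp
  | cons a l ih =>
    intro init
    rw [List.foldl_cons, ih, otimes_strat]
    simp only [List.mem_cons]
    constructor
    · rintro ⟨⟨h1, h2⟩, h3⟩
      exact ⟨h1, fun x hx => hx.elim (fun e => e ▸ h2) (h3 x)⟩
    · rintro ⟨h1, h2⟩
      exact ⟨⟨h1, h2 a (.inl rfl)⟩, fun x hx => h2 x (.inr hx)⟩

mutual
theorem bang_strat' : ∀ o : OGame, ((bang o).strat = true ↔ o.strat = true)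
  | .mk [] => by rw [bang]
  | .mk (p :: ps) => by
    rw [bang, foldl_otimes_strat, ostrat_iff [bang' p], ostrat_iff (p :: ps)]
    constructor
    · rintro ⟨h1, h2⟩ x hx
      rcases List.mem_cons.mp hx with h | h
      · exact (bang'_strat x).mp (h1 _ (List.mem_singleton.mpr (congrArg bang' h)))
      · have h3 := h2 _ (List.mem_map.mpr ⟨⟨x, h⟩, List.mem_attach _ _, rfl⟩)
        exact (bang'_strat x).mp
          ((ostrat_iff [bang' x]).mp h3 _ (List.mem_singleton.mpr rfl))
    · intro h
      refine ⟨fun y hy => ?_, fun x hx => ?_⟩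
      · rcases List.mem_singleton.mp hy with rfl
        exact (bang'_strat p).mpr (h p List.mem_cons_self)
      · obtain ⟨⟨q, hq⟩, -, rfl⟩ := List.mem_map.mp hx
        rw [ostrat_iff]
        rintro y hy
        rcases List.mem_singleton.mp hy with rfl
        exact (bang'_strat q).mpr (h q (List.mem_cons_of_mem _ hq))
  termination_by o => sizeOf o
  decreasing_by
    all_goals first
      | (have h' := List.sizeOf_lt_of_mem hx;
         simp only [OGame.mk.sizeOf_spec, PGame.mk.sizeOf_spec,
           List.cons.sizeOf_spec] at h' ⊢; omega)
      | (have h' := List.sizeOf_lt_of_mem h;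
         simp only [OGame.mk.sizeOf_spec, PGame.mk.sizeOf_spec,
           List.cons.sizeOf_spec] at h' ⊢; omega)
      | (have h' := List.sizeOf_lt_of_mem hq;
         simp only [OGame.mk.sizeOf_spec, PGame.mk.sizeOf_spec,
           List.cons.sizeOf_spec] at h' ⊢; omega)
      | (simp only [OGame.mk.sizeOf_spec, PGame.mk.sizeOf_spec,
           List.cons.sizeOf_spec]; omega)
theorem bang'_strat : ∀ p : PGame, ((bang' p).strat = true ↔ p.strat = true)
  | .mk os => by
    rw [bang', pstrat_iff, pstrat_iff]
    constructor
    · rintro ⟨x, hx, hs⟩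
      obtain ⟨⟨o, ho⟩, -, rfl⟩ := List.mem_map.mp hx
      exact ⟨o, ho, (bang_strat' o).mp hs⟩
    · rintro ⟨o, ho, hs⟩
      exact ⟨_, List.mem_map.mpr ⟨⟨o, ho⟩, List.mem_attach _ _, rfl⟩,
        (bang_strat' o).mpr hs⟩
  termination_by p => sizeOf p
  decreasing_by
    all_goals
      (have h' := List.sizeOf_lt_of_mem ho;
       simp only [OGame.mk.sizeOf_spec, PGame.mk.sizeOf_spec] at h' ⊢; omega)
end

/-- !O has a strategy iff O has a strategy. -/
theorem bang_strat (O : OGame) : (bang O).strat = true ↔ O.strat = true :=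
  bang_strat' O
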